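/- For the complete 3-uniform hypergraph G on n ≥ 3 vertices: if A_G x = 0 for x ∈ ℂⁿ with all entries nonzero, then all entries of x are equal. (Key step: for distinct i,j, one has x_i (A_G x)_i − x_j (A_G x)_j = 2 (x_i − x_j) Σ_{k ≠ i,j} x_k.) -/
import Mathlib


/-- `(A x)_i` for the complete 3-uniform hypergraph on `[n]`. -/
noncomputable def completeAdjMulVec {n : ℕ} (x : Fin n → ℂ) (i : Fin n) : ℂ :=
  ∑ j : Fin n, ∑ k : Fin n,
    (if i ≠ j ∧ i ≠ k ∧ j ≠ k then (1 : ℂ) else 0) * x j * x k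

lemma adj_eq {n : ℕ} (x : Fin n → ℂ) (i : Fin n) :
    completeAdjMulVec x i = (∑ j, x j - x i)^2 - ((∑ j, (x j)^2) - (x i)^2) := by
  unfold completeAdjMulVec
  have h : ∀ j k : Fin n, (if i ≠ j ∧ i ≠ k ∧ j ≠ k then (1:ℂ) else 0) * x j * x k =
      x j * x k - (if i = j then (1:ℂ) else 0) * x j * x k
      - (if i = k then (1:ℂ) else 0) * x j * x k
      - (if j = k then (1:ℂ) else 0) * x j * x k
      + 2 * ((if i = j then (1:ℂ) else 0) * ((if i = k then (1:ℂ) else 0) * (x j * x k))) := by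
    intro j k
    by_cases h1 : i = j <;> by_cases h2 : i = k <;> by_cases h3 : j = k <;>
      simp_all <;> ring
  simp only [h, Finset.sum_sub_distrib, Finset.sum_add_distrib, ← Finset.mul_sum,
    ← Finset.sum_mul, Finset.mul_sum]
  simp [Finset.sum_ite_eq, ite_mul, ← Finset.sum_mul, mul_ite]
  rw [← Finset.sum_mul_sum]
  simp only [← Finset.mul_sum, ← sq]
  ring

/-- For the complete 3-uniform hypergraph on `n ≥ 3` vertices: if `A_G x = 0`
and every entry of `x` is nonzero, then all entries of `x` are equal. -/
theorem complete_entries_equal {n : ℕ} (hn : 3 ≤ n) (x : Fin n → ℂ)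
    (h1 : ∀ i, completeAdjMulVec x i = 0) (hx : ∀ i, x i ≠ 0) :
    ∀ i j, x i = x j := by
  set S := ∑ j, x j with hS
  set Q := ∑ j, (x j)^2 with hQ
  have heq : ∀ i, 2 * (x i)^2 - 2 * S * (x i) + S^2 - Q = 0 := by
    intro i
    have h := h1 i
    rw [adj_eq] at h
    linear_combination h
  have hpair : ∀ i j, (x i - x j) * (x i + x j - S) = 0 := by
    intro i j
    linear_combination (heq i - heq j) / 2
  by_contra hcon
  push_neg at hcon
  obtain ⟨i, j, hij⟩ := hcon
  have hSij : S = x i + x j := by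
    rcases mul_eq_zero.1 (hpair i j) with h | h
    · exact absurd (sub_eq_zero.1 h) hij
    · linear_combination -h
  have hdich : ∀ k, x k = x i ∨ x k = x j := by
    intro k
    by_cases hki : x k = x i
    · exact Or.inl hki
    · right
      rcases mul_eq_zero.1 (hpair k i) with h | h
      · exact absurd (sub_eq_zero.1 h) hki
      · linear_combination h + hSij
  set s := Finset.univ.filter (fun k => x k = x i) with hs
  have hcards : s.card + sᶜ.card = n := by
    rw [Finset.card_add_card_compl]; simp
  have hmem : ∀ k ∈ sᶜ, x k = x j := by
    intro k hk
    rcases hdich k with h | h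
    · exact absurd (by simp [hs, h] : k ∈ s) (Finset.mem_compl.1 hk)
    · exact h
  have hmem' : ∀ k ∈ s, x k = x i := fun k hk => (Finset.mem_filter.1 hk).2
  have hmemsq : ∀ k ∈ sᶜ, (x k)^2 = (x j)^2 := fun k hk => by rw [hmem k hk]
  have hmemsq' : ∀ k ∈ s, (x k)^2 = (x i)^2 := fun k hk => by rw [hmem' k hk]
  have hA : (s.card : ℂ) * x i + (sᶜ.card : ℂ) * x j = x i + x j := by
    have : S = ∑ k ∈ s, x k + ∑ k ∈ sᶜ, x k := (Finset.sum_add_sum_compl s x).symm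
    rw [Finset.sum_congr rfl hmem', Finset.sum_congr rfl hmem] at this
    simp only [Finset.sum_const, nsmul_eq_mul] at this
    rw [← this, hSij]
  have hQval : Q = (x i)^2 + (x j)^2 := by
    have h := heq i
    rw [hSij] at h
    linear_combination -h
  have hB : (s.card : ℂ) * (x i)^2 + (sᶜ.card : ℂ) * (x j)^2 = (x i)^2 + (x j)^2 := by
    have : Q = ∑ k ∈ s, (x k)^2 + ∑ k ∈ sᶜ, (x k)^2 :=
      (Finset.sum_add_sum_compl s _).symm
    rw [Finset.sum_congr rfl hmemsq', Finset.sum_congr rfl hmemsq] at this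
    simp only [Finset.sum_const, nsmul_eq_mul] at this
    rw [← this, hQval]
  have hq1 : sᶜ.card = 1 := by
    have key : ((sᶜ.card : ℂ) - 1) * (x j * (x j - x i)) = 0 := by
      linear_combination hB - x i * hA
    rcases mul_eq_zero.1 key with h | h
    · have : (sᶜ.card : ℂ) = 1 := by linear_combination h
      exact_mod_cast this
    · rcases mul_eq_zero.1 h with h' | h'
      · exact absurd h' (hx j)
      · exact absurd (sub_eq_zero.1 h').symm hij
  have hp1 : s.card = 1 := by
    have key : ((s.card : ℂ) - 1) * (x i * (x i - x j)) = 0 := by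
      linear_combination hB - x j * hA
    rcases mul_eq_zero.1 key with h | h
    · have : (s.card : ℂ) = 1 := by linear_combination h
      exact_mod_cast this
    · rcases mul_eq_zero.1 h with h' | h'
      · exact absurd h' (hx i)
      · exact absurd (sub_eq_zero.1 h') hij
  omega
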